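/- Let λ, μ, ν > 0, θ ∈ (0, π/2), α, β ∈ ℝ. Let p = (cos θ·e^{iα}, sin θ·e^{iβ}) ∈ S³, ∂α = (i·cos θ·e^{iα}, 0), ∂β = (0, i·sin θ·e^{iβ}), Y_p = μ⁻¹·p·(0,−1), Z_p = ν⁻¹·p·(0,i), and D = μ²·sin²(α+β) + ν²·cos²(α+β). Set w = (sin θ·cos θ/D)·(μ²ν·sin(α+β)·Z_p − μν²·cos(α+β)·Y_p). Then: (i) (−cos θ·e^{iα}, 0) − w lies in the real span of {∂α, ∂β, p}; (ii) (0, −sin θ·e^{iβ}) + w lies in the real span of {∂α, ∂β, p}; (iii) g_p(w, ∂α) = g_p(w, ∂β) = g_p(w, p) = 0. (Hence w = B_g(∂α, ∂α) = −B_g(∂β, ∂β) is the second fundamental form of the torus T_θ² in (S³,g).) -/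
import Mathlib


open Complex Real

/-- The group multiplication of `S³ ⊂ ℂ²`, extended ℝ-bilinearly to all of `ℂ²`. -/
def s3mul (p q : ℂ × ℂ) : ℂ × ℂ :=
  (p.1 * q.1 - (starRingEnd ℂ) p.2 * q.2, (starRingEnd ℂ) p.1 * q.2 + p.2 * q.1)

/-- The inverse `p⁻¹ = (conj z, −w)` of `p = (z,w) ∈ S³`. -/
def s3inv (p : ℂ × ℂ) : ℂ × ℂ := ((starRingEnd ℂ) p.1, -p.2)

/-- The standard real inner product on `ℂ² ≅ ℝ⁴`. -/
def rip (a b : ℂ × ℂ) : ℝ := (a.1 * (starRingEnd ℂ) b.1 + a.2 * (starRingEnd ℂ) b.2).re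

/-- The generalised Riemannian Berger metric on `S³` with parameters `l, m, n`,
evaluated at `p` on tangent vectors `A, B`. -/
def bergerG (l m n : ℝ) (p A B : ℂ × ℂ) : ℝ :=
  l ^ 2 * rip (s3mul (s3inv p) A) (Complex.I, 0) * rip (s3mul (s3inv p) B) (Complex.I, 0)
  + m ^ 2 * rip (s3mul (s3inv p) A) (0, -1) * rip (s3mul (s3inv p) B) (0, -1)
  + n ^ 2 * rip (s3mul (s3inv p) A) (0, Complex.I) * rip (s3mul (s3inv p) B) (0, Complex.I)
  + rip (s3mul (s3inv p) A) (1, 0) * rip (s3mul (s3inv p) B) (1, 0)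

lemma expi (x : ℝ) : Complex.exp (x * Complex.I) = Real.cos x + Real.sin x * Complex.I := by
  rw [Complex.exp_mul_I]; push_cast; ring

lemma heau (x : ℝ) : Complex.exp (x * Complex.I) * (starRingEnd ℂ) (Complex.exp (x * Complex.I)) = 1 := by
  rw [Complex.mul_conj]; norm_cast; simp [Complex.normSq_eq_norm_sq, Complex.norm_exp_ofReal_mul_I]

lemma hconj (x : ℝ) : (starRingEnd ℂ) (Complex.exp (x * Complex.I)) = Real.cos x - Real.sin x * Complex.I := by
  rw [expi, map_add, map_mul, Complex.conj_I, Complex.conj_ofReal, Complex.conj_ofReal]; ring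

lemma hexpadd (x y : ℝ) : Complex.exp (x * Complex.I) * Complex.exp (y * Complex.I)
    = Complex.exp ((x + y : ℝ) * Complex.I) := by
  rw [← Complex.exp_add]; push_cast; ring_nf

theorem second_fundamental_form_of_torus_in_riemannian_berger_sphere
    (l m n : ℝ) (hl : 0 < l) (hm : 0 < m) (hn : 0 < n)
    (θ : ℝ) (hθ : θ ∈ Set.Ioo 0 (π / 2)) (α β : ℝ)
    (p dα dβ Yp Zp : ℂ × ℂ)
    (hp : p = ((Real.cos θ : ℂ) * Complex.exp (α * Complex.I),
               (Real.sin θ : ℂ) * Complex.exp (β * Complex.I)))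
    (hdα : dα = (Complex.I * (Real.cos θ : ℂ) * Complex.exp (α * Complex.I), (0 : ℂ)))
    (hdβ : dβ = ((0 : ℂ), Complex.I * (Real.sin θ : ℂ) * Complex.exp (β * Complex.I)))
    (hYp : Yp = (m⁻¹ : ℝ) • s3mul p ((0 : ℂ), (-1 : ℂ)))
    (hZp : Zp = (n⁻¹ : ℝ) • s3mul p ((0 : ℂ), Complex.I))
    (D : ℝ) (hD : D = m ^ 2 * Real.sin (α + β) ^ 2 + n ^ 2 * Real.cos (α + β) ^ 2)
    (w : ℂ × ℂ)
    (hw : w = (Real.sin θ * Real.cos θ / D) •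
      ((m ^ 2 * n * Real.sin (α + β)) • Zp - (m * n ^ 2 * Real.cos (α + β)) • Yp)) :
    ((-(Real.cos θ : ℂ) * Complex.exp (α * Complex.I), (0 : ℂ)) - w
        ∈ Submodule.span ℝ ({dα, dβ, p} : Set (ℂ × ℂ))) ∧
    (((0 : ℂ), -(Real.sin θ : ℂ) * Complex.exp (β * Complex.I)) + w
        ∈ Submodule.span ℝ ({dα, dβ, p} : Set (ℂ × ℂ))) ∧
    (bergerG l m n p w dα = 0 ∧ bergerG l m n p w dβ = 0 ∧ bergerG l m n p w p = 0) := by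
  have hpy := Real.sin_sq_add_cos_sq (α + β)
  have hD0 : D ≠ 0 := by
    rcases le_or_gt (m ^ 2) (n ^ 2) with h | h
    · nlinarith [sq_nonneg (Real.cos (α + β)), sq_nonneg (Real.sin (α + β)), pow_pos hm 2]
    · nlinarith [sq_nonneg (Real.cos (α + β)), sq_nonneg (Real.sin (α + β)), pow_pos hn 2]
  have hDC : (D : ℂ) ≠ 0 := Complex.ofReal_ne_zero.mpr hD0
  have hDinv : (D : ℂ) * (D : ℂ)⁻¹ = 1 := mul_inv_cancel₀ hDC
  -- explicit form of w
  have hw' : w = (-(↑(Real.sin θ * Real.cos θ / D) * (Real.sin θ : ℂ) *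
        ((starRingEnd ℂ) (Complex.exp (β * Complex.I))) *
        (↑(n ^ 2 * Real.cos (α + β)) + ↑(m ^ 2 * Real.sin (α + β)) * Complex.I)),
      ↑(Real.sin θ * Real.cos θ / D) * (Real.cos θ : ℂ) *
        ((starRingEnd ℂ) (Complex.exp (α * Complex.I))) *
        (↑(n ^ 2 * Real.cos (α + β)) + ↑(m ^ 2 * Real.sin (α + β)) * Complex.I)) := by
    have hmC : (m : ℂ) ≠ 0 := Complex.ofReal_ne_zero.mpr hm.ne'
    have hnC : (n : ℂ) ≠ 0 := Complex.ofReal_ne_zero.mpr hn.ne'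
    rw [hw, hZp, hYp, hp]
    simp only [s3mul, Prod.smul_mk, Prod.mk_sub_mk, smul_eq_mul, Complex.real_smul,
      map_mul, Complex.conj_ofReal, Prod.mk.injEq]
    constructor <;> (push_cast; field_simp; ring)
  -- conj splitting identities
  have h2c : (starRingEnd ℂ) (Complex.exp (α * Complex.I)) *
      (starRingEnd ℂ) (Complex.exp (β * Complex.I)) =
      (starRingEnd ℂ) (Complex.exp ((α + β : ℝ) * Complex.I)) := by
    rw [← map_mul, hexpadd]
  have hsplitA : (starRingEnd ℂ) (Complex.exp (β * Complex.I)) =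
      Complex.exp (α * Complex.I) * (starRingEnd ℂ) (Complex.exp ((α + β : ℝ) * Complex.I)) := by
    linear_combination Complex.exp (α * Complex.I) * h2c -
      (starRingEnd ℂ) (Complex.exp (β * Complex.I)) * heau α
  have hsplitB : (starRingEnd ℂ) (Complex.exp (α * Complex.I)) =
      Complex.exp (β * Complex.I) * (starRingEnd ℂ) (Complex.exp ((α + β : ℝ) * Complex.I)) := by
    linear_combination Complex.exp (β * Complex.I) * h2c -
      (starRingEnd ℂ) (Complex.exp (α * Complex.I)) * heau β
  have hA : (starRingEnd ℂ) (Complex.exp (β * Complex.I)) *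
      (↑(n ^ 2 * Real.cos (α + β)) + ↑(m ^ 2 * Real.sin (α + β)) * Complex.I) =
      Complex.exp (α * Complex.I) *
      (↑D + ↑((m ^ 2 - n ^ 2) * Real.sin (α + β) * Real.cos (α + β)) * Complex.I) := by
    rw [hsplitA, hconj (α + β), hD]
    linear_combination (norm := (push_cast; ring1))
      (-(Complex.exp (α * Complex.I)) * (m : ℂ) ^ 2 * (Real.sin (α + β) : ℂ) ^ 2) * Complex.I_sq
  have hB : (starRingEnd ℂ) (Complex.exp (α * Complex.I)) *
      (↑(n ^ 2 * Real.cos (α + β)) + ↑(m ^ 2 * Real.sin (α + β)) * Complex.I) =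
      Complex.exp (β * Complex.I) *
      (↑D + ↑((m ^ 2 - n ^ 2) * Real.sin (α + β) * Real.cos (α + β)) * Complex.I) := by
    rw [hsplitB, hconj (α + β), hD]
    linear_combination (norm := (push_cast; ring1))
      (-(Complex.exp (β * Complex.I)) * (m : ℂ) ^ 2 * (Real.sin (α + β) : ℂ) ^ 2) * Complex.I_sq
  have hpyθC : (Real.sin θ : ℂ) ^ 2 + (Real.cos θ : ℂ) ^ 2 = 1 := by
    exact_mod_cast congrArg (fun x : ℝ => (x : ℂ)) (Real.sin_sq_add_cos_sq θ)
  -- span memberships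
  have memspan : ∀ (x : ℂ × ℂ) (a b c : ℝ), (D : ℝ) • x = a • dα + b • dβ + c • p →
      x ∈ Submodule.span ℝ ({dα, dβ, p} : Set (ℂ × ℂ)) := by
    intro x a b c hx
    have hmem : (D : ℝ) • x ∈ Submodule.span ℝ ({dα, dβ, p} : Set (ℂ × ℂ)) := by
      rw [hx]
      refine Submodule.add_mem _ (Submodule.add_mem _ ?_ ?_) ?_ <;>
        exact Submodule.smul_mem _ _ (Submodule.subset_span (by simp))
    have h2 := Submodule.smul_mem _ (D⁻¹ : ℝ) hmem
    rwa [smul_smul, inv_mul_cancel₀ hD0, one_smul] at h2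
  -- frame computations
  have hqw : s3mul (s3inv p) w = ((0 : ℂ), ↑(Real.sin θ * Real.cos θ / D) *
      (↑(n ^ 2 * Real.cos (α + β)) + ↑(m ^ 2 * Real.sin (α + β)) * Complex.I)) := by
    rw [hw', hp]
    simp only [s3mul, s3inv, map_mul, map_neg, Complex.conj_ofReal, Complex.conj_conj,
      Prod.mk.injEq]
    constructor
    · push_cast; ring
    · push_cast
      linear_combination (Complex.sin θ * Complex.cos θ / D *
          ((n : ℂ) ^ 2 * Complex.cos (α + β) + (m : ℂ) ^ 2 * Complex.sin (α + β) * Complex.I)) *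
        ((Complex.cos θ) ^ 2 * heau α + (Complex.sin θ) ^ 2 * heau β +
          (Complex.sin_sq_add_cos_sq (θ : ℂ)))
  have hqα : s3mul (s3inv p) dα = (Complex.I * (Real.cos θ : ℂ) ^ 2,
      -(Complex.I * ((Real.cos θ : ℂ) * (Real.sin θ : ℂ)) *
        (↑(Real.cos (α + β)) + ↑(Real.sin (α + β)) * Complex.I))) := by
    rw [hp, hdα]
    simp only [s3mul, s3inv, map_mul, map_neg, Complex.conj_ofReal, Complex.conj_conj,
      Prod.mk.injEq]
    constructor
    · linear_combination (norm := (push_cast; ring1)) (Complex.I * (Real.cos θ : ℂ) ^ 2) * heau α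
    · rw [← expi]
      linear_combination (norm := (push_cast; ring1))
        (-(Complex.I * (Real.cos θ : ℂ) * (Real.sin θ : ℂ))) * hexpadd α β
  have hqβ : s3mul (s3inv p) dβ = (Complex.I * (Real.sin θ : ℂ) ^ 2,
      Complex.I * ((Real.cos θ : ℂ) * (Real.sin θ : ℂ)) *
        (↑(Real.cos (α + β)) + ↑(Real.sin (α + β)) * Complex.I)) := by
    rw [hp, hdβ]
    simp only [s3mul, s3inv, map_mul, map_neg, Complex.conj_ofReal, Complex.conj_conj,
      Prod.mk.injEq]
    constructor
    · linear_combination (norm := (push_cast; ring1)) (Complex.I * (Real.sin θ : ℂ) ^ 2) * heau β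
    · rw [← expi]
      linear_combination (norm := (push_cast; ring1))
        (Complex.I * (Real.cos θ : ℂ) * (Real.sin θ : ℂ)) * hexpadd α β
  have hqp : s3mul (s3inv p) p = ((1 : ℂ), (0 : ℂ)) := by
    rw [hp]
    simp only [s3mul, s3inv, map_mul, map_neg, Complex.conj_ofReal, Complex.conj_conj,
      Prod.mk.injEq]
    constructor
    · linear_combination (norm := (push_cast; ring1)) (Real.cos θ : ℂ) ^ 2 * heau α +
        (Real.sin θ : ℂ) ^ 2 * heau β + hpyθC
    · push_cast; ring
  refine ⟨?_, ?_, ?_, ?_, ?_⟩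
  · refine memspan _ (Real.sin θ ^ 2 * (m ^ 2 - n ^ 2) * Real.sin (α + β) * Real.cos (α + β))
      (-(Real.cos θ ^ 2 * (m ^ 2 - n ^ 2) * Real.sin (α + β) * Real.cos (α + β)))
      (-(D * Real.cos θ ^ 2)) ?_
    rw [hw', hp, hdα, hdβ]
    simp only [Prod.smul_mk, Prod.mk_sub_mk, Prod.mk_add_mk, Complex.real_smul, Prod.mk.injEq]
    constructor
    · linear_combination (norm := (push_cast; ring1))
        ((D : ℂ) * ((Real.sin θ : ℂ) ^ 2 * (Real.cos θ : ℂ)) * (D : ℂ)⁻¹) * hA +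
        ((Real.sin θ : ℂ) ^ 2 * (Real.cos θ : ℂ) * Complex.exp (α * Complex.I) * ((D : ℂ) +
          ((m : ℂ) ^ 2 - (n : ℂ) ^ 2) * (Real.sin (α + β) : ℂ) * (Real.cos (α + β) : ℂ) * Complex.I)) * hDinv +
        ((D : ℂ) * (Real.cos θ : ℂ) * Complex.exp (α * Complex.I)) * hpyθC
    · linear_combination (norm := (push_cast; ring1))
        (-((D : ℂ) * ((Real.sin θ : ℂ) * (Real.cos θ : ℂ) ^ 2) * (D : ℂ)⁻¹)) * hB +
        (-((Real.sin θ : ℂ) * (Real.cos θ : ℂ) ^ 2 * Complex.exp (β * Complex.I) * ((D : ℂ) +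
          ((m : ℂ) ^ 2 - (n : ℂ) ^ 2) * (Real.sin (α + β) : ℂ) * (Real.cos (α + β) : ℂ) * Complex.I))) * hDinv
  · refine memspan _ (-(Real.sin θ ^ 2 * (m ^ 2 - n ^ 2) * Real.sin (α + β) * Real.cos (α + β)))
      (Real.cos θ ^ 2 * (m ^ 2 - n ^ 2) * Real.sin (α + β) * Real.cos (α + β))
      (-(D * Real.sin θ ^ 2)) ?_
    rw [hw', hp, hdα, hdβ]
    simp only [Prod.smul_mk, Prod.mk_add_mk, Complex.real_smul, Prod.mk.injEq]
    constructor
    · linear_combination (norm := (push_cast; ring1))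
        (-((D : ℂ) * ((Real.sin θ : ℂ) ^ 2 * (Real.cos θ : ℂ)) * (D : ℂ)⁻¹)) * hA +
        (-((Real.sin θ : ℂ) ^ 2 * (Real.cos θ : ℂ) * Complex.exp (α * Complex.I) * ((D : ℂ) +
          ((m : ℂ) ^ 2 - (n : ℂ) ^ 2) * (Real.sin (α + β) : ℂ) * (Real.cos (α + β) : ℂ) * Complex.I))) * hDinv
    · linear_combination (norm := (push_cast; ring1))
        ((D : ℂ) * ((Real.sin θ : ℂ) * (Real.cos θ : ℂ) ^ 2) * (D : ℂ)⁻¹) * hB +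
        ((Real.sin θ : ℂ) * (Real.cos θ : ℂ) ^ 2 * Complex.exp (β * Complex.I) * ((D : ℂ) +
          ((m : ℂ) ^ 2 - (n : ℂ) ^ 2) * (Real.sin (α + β) : ℂ) * (Real.cos (α + β) : ℂ) * Complex.I)) * hDinv +
        ((D : ℂ) * (Real.sin θ : ℂ) * Complex.exp (β * Complex.I)) * hpyθC
  · rw [bergerG, hqw, hqα]
    simp only [rip, Complex.conj_I, map_zero, map_one, map_neg, Complex.add_re, Complex.add_im,
      Complex.mul_re, Complex.mul_im, Complex.sub_re, Complex.sub_im, Complex.neg_re,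
      Complex.neg_im, Complex.I_re, Complex.I_im, pow_two, Complex.ofReal_re, Complex.ofReal_im, Complex.one_re, Complex.one_im,
      Complex.zero_re, Complex.zero_im, mul_zero, zero_mul, mul_one, one_mul, sub_zero, zero_sub,
      add_zero, zero_add, neg_zero, neg_neg]
    ring
  · rw [bergerG, hqw, hqβ]
    simp only [rip, Complex.conj_I, map_zero, map_one, map_neg, Complex.add_re, Complex.add_im,
      Complex.mul_re, Complex.mul_im, Complex.sub_re, Complex.sub_im, Complex.neg_re,
      Complex.neg_im, Complex.I_re, Complex.I_im, pow_two, Complex.ofReal_re, Complex.ofReal_im, Complex.one_re, Complex.one_im,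
      Complex.zero_re, Complex.zero_im, mul_zero, zero_mul, mul_one, one_mul, sub_zero, zero_sub,
      add_zero, zero_add, neg_zero, neg_neg]
    ring
  · rw [bergerG, hqw, hqp]
    simp only [rip, Complex.conj_I, map_zero, map_one, map_neg, Complex.add_re, Complex.add_im,
      Complex.mul_re, Complex.mul_im, Complex.sub_re, Complex.sub_im, Complex.neg_re,
      Complex.neg_im, Complex.I_re, Complex.I_im, pow_two, Complex.ofReal_re, Complex.ofReal_im, Complex.one_re, Complex.one_im,
      Complex.zero_re, Complex.zero_im, mul_zero, zero_mul, mul_one, one_mul, sub_zero, zero_sub,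
      add_zero, zero_add, neg_zero, neg_neg]
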